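/- Let G ∈ S^n_+ ∩ S^n_C be a centered PSD matrix of rank d with centered facial vector V (range(V) = range(G), Vᵀe = 0, full column rank) and full rank factorization G = WWᵀ. Let α ⊆ [n] with |α| ≥ d+1 be such that G_α := K†(K(G)_α) satisfies rank(G_α) = d, with full rank factorization G_α = W_α W_αᵀ, and let V_α := P_α(V) be the corresponding rows of V. Then K†(P_α(K(G))) = J P_α(G) J = G_α, and for Q solving J V_α Q = W_α one has P_α(K(V Q Qᵀ Vᵀ) - K(G)) = 0, i.e., the EDM restricted to α is recovered: K(VQQᵀVᵀ)_α = D_α. -/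

import Mathlib

open Matrix BigOperators

noncomputable section

def lind {ι : Type*} [Fintype ι] (M : Matrix ι ι ℝ) : Matrix ι ι ℝ :=
  Matrix.of fun i j => M i i + M j j - 2 * M i j

def Jmat (ι : Type*) [Fintype ι] [DecidableEq ι] : Matrix ι ι ℝ :=
  (1 : Matrix ι ι ℝ) - (Fintype.card ι : ℝ)⁻¹ • Matrix.of (fun _ _ => (1 : ℝ))

section Helpers

variable {ι : Type*} [Fintype ι] [DecidableEq ι]

lemma Jmat_transpose : (Jmat ι)ᵀ = Jmat ι := by
  ext i j
  simp [Jmat, transpose_apply, one_apply, eq_comm]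

lemma mul_J_apply (M : Matrix ι ι ℝ) (i j : ι) :
    (M * Jmat ι) i j = M i j - (Fintype.card ι : ℝ)⁻¹ * ∑ l, M i l := by
  simp only [Jmat, mul_sub, Matrix.mul_apply, Matrix.sub_apply, Matrix.smul_apply, smul_eq_mul,
    Matrix.of_apply, Matrix.one_apply, mul_ite, mul_one, mul_zero,
    Finset.sum_sub_distrib, Finset.sum_ite_eq', Finset.mem_univ, if_true]
  rw [← Finset.sum_mul]
  ring

lemma J_mul_apply (M : Matrix ι ι ℝ) (i j : ι) :
    (Jmat ι * M) i j = M i j - (Fintype.card ι : ℝ)⁻¹ * ∑ l, M l j := by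
  simp only [Jmat, sub_mul, Matrix.mul_apply, Matrix.sub_apply, Matrix.smul_apply, smul_eq_mul,
    Matrix.of_apply, Matrix.one_apply, ite_mul, one_mul, zero_mul,
    Finset.sum_ite_eq, Finset.mem_univ, if_true, Finset.sum_sub_distrib]
  rw [← Finset.mul_sum]
  ring

lemma JMJ_apply (M : Matrix ι ι ℝ) (i j : ι) :
    (Jmat ι * M * Jmat ι) i j = M i j
      - (Fintype.card ι : ℝ)⁻¹ * (∑ l, M l j)
      - (Fintype.card ι : ℝ)⁻¹ * (∑ l, M i l)
      + (Fintype.card ι : ℝ)⁻¹ * (Fintype.card ι : ℝ)⁻¹ * (∑ l, ∑ m, M l m) := by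
  rw [mul_J_apply]
  rw [J_mul_apply]
  have h : ∀ l, (Jmat ι * M) i l = M i l - (Fintype.card ι : ℝ)⁻¹ * ∑ m, M m l :=
    fun l => J_mul_apply M i l
  rw [Finset.sum_congr rfl (fun l _ => h l)]
  rw [Finset.sum_sub_distrib, ← Finset.mul_sum, Finset.sum_comm]
  ring

lemma lind_apply (M : Matrix ι ι ℝ) (i j : ι) :
    lind M i j = M i i + M j j - 2 * M i j := rfl

lemma part1 (hk : (Fintype.card ι : ℝ) ≠ 0) (M : Matrix ι ι ℝ) :
    (-(1/2 : ℝ)) • (Jmat ι * lind M * Jmat ι) = Jmat ι * M * Jmat ι := by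
  ext i j
  rw [Matrix.smul_apply, JMJ_apply, JMJ_apply]
  have h1 : ∑ l, lind M l j
      = (∑ l, M l l) + (Fintype.card ι : ℝ) * M j j - 2 * ∑ l, M l j := by
    simp only [lind_apply, Finset.sum_sub_distrib, Finset.sum_add_distrib,
      Finset.sum_const, nsmul_eq_mul, Finset.card_univ, ← Finset.mul_sum]
  have h2 : ∑ l, lind M i l
      = (Fintype.card ι : ℝ) * M i i + (∑ l, M l l) - 2 * ∑ l, M i l := by
    simp only [lind_apply, Finset.sum_sub_distrib, Finset.sum_add_distrib,
      Finset.sum_const, nsmul_eq_mul, Finset.card_univ, ← Finset.mul_sum]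
  have h3 : ∑ l, ∑ m, lind M l m
      = (Fintype.card ι : ℝ) * (∑ l, M l l) + (Fintype.card ι : ℝ) * (∑ l, M l l)
        - 2 * ∑ l, ∑ m, M l m := by
    simp only [lind_apply, Finset.sum_sub_distrib, Finset.sum_add_distrib,
      Finset.sum_const, nsmul_eq_mul, Finset.card_univ, ← Finset.mul_sum]
  rw [h1, h2, h3, lind_apply]
  field_simp
  have hk2 : (Fintype.card ι : ℝ) ^ 2 * ((Fintype.card ι : ℝ)⁻¹) ^ 2 = 1 := by
    rw [← mul_pow, mul_inv_cancel₀ hk, one_pow]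
  linear_combination ((∑ l, ∑ m, M l m) - (Fintype.card ι : ℝ) * (∑ l, M l j)
    - (Fintype.card ι : ℝ) * (∑ l, M i l) + (Fintype.card ι : ℝ) ^ 2 * M i j) * hk2

lemma key2 (M : Matrix ι ι ℝ) (hsym : Mᵀ = M) (h : Jmat ι * M * Jmat ι = 0) :
    lind M = 0 := by
  have e : ∀ a b : ι, M a b - (Fintype.card ι : ℝ)⁻¹ * (∑ l, M l b)
      - (Fintype.card ι : ℝ)⁻¹ * (∑ l, M a l)
      + (Fintype.card ι : ℝ)⁻¹ * (Fintype.card ι : ℝ)⁻¹ * (∑ l, ∑ m, M l m) = 0 := by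
    intro a b
    rw [← JMJ_apply, h]
    rfl
  have hs : ∀ a : ι, (∑ l, M l a) = ∑ l, M a l := by
    intro a
    refine Finset.sum_congr rfl fun l _ => ?_
    simpa using congrFun (congrFun hsym a) l
  ext i j
  have e1 := e i i; rw [hs i] at e1
  have e2 := e j j; rw [hs j] at e2
  have e3 := e i j; rw [hs j] at e3
  simp only [lind_apply, Matrix.zero_apply]
  linarith

lemma lind_sub {n : ℕ} (M : Matrix (Fin n) (Fin n) ℝ) (c : ι → Fin n) :
    (lind M).submatrix c c = lind (M.submatrix c c) := by
  ext i j
  simp [lind]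

end Helpers

/-- Recovery of a principal block of the EDM from facial vectors:
`K†(P_α(K(G))) = J P_α(G) J = G_α`, and if `Q` solves `J V_α Q = W_α`, then
`K(V Q Qᵀ Vᵀ)` agrees with `K(G)` on the block `α`. -/
theorem block_recovery (n d : ℕ) (G : Matrix (Fin n) (Fin n) ℝ)
    (hG : G.PosSemidef) (hGe : G *ᵥ (fun _ => (1 : ℝ)) = 0) (hGrank : G.rank = d)
    (V : Matrix (Fin n) (Fin d) ℝ) (hVrank : V.rank = d)
    (hVe : (fun _ => (1 : ℝ)) ᵥ* V = 0)
    (hrange : ∀ x : Fin n → ℝ, (∃ y, G *ᵥ y = x) ↔ ∃ c, V *ᵥ c = x)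
    (W : Matrix (Fin n) (Fin d) ℝ) (hW : G = W * Wᵀ)
    (α : Finset (Fin n)) (hα : d + 1 ≤ α.card)
    (Gα : Matrix α α ℝ)
    (hGα : Gα = (-(1 / 2 : ℝ)) • (Jmat α *
      (lind G).submatrix (fun i : α => (i : Fin n)) (fun i : α => (i : Fin n)) *
      Jmat α))
    (hGαrank : Gα.rank = d)
    (Wα : Matrix α (Fin d) ℝ) (hWα : Gα = Wα * Wαᵀ)
    (Q : Matrix (Fin d) (Fin d) ℝ)
    (hQ : Jmat α * ((V.submatrix (fun i : α => (i : Fin n)) id) * Q) = Wα) :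
    Gα = Jmat α *
        G.submatrix (fun i : α => (i : Fin n)) (fun i : α => (i : Fin n)) * Jmat α ∧
    (lind (V * Q * Qᵀ * Vᵀ)).submatrix
        (fun i : α => (i : Fin n)) (fun i : α => (i : Fin n)) =
      (lind G).submatrix (fun i : α => (i : Fin n)) (fun i : α => (i : Fin n)) := by
  set c : α → Fin n := fun i => (i : Fin n) with hc
  have hk : (Fintype.card α : ℝ) ≠ 0 := by
    have hcard : Fintype.card α = α.card := Fintype.card_coe α
    have : 0 < Fintype.card α := by omega
    exact_mod_cast this.ne'
  -- Part 1
  have h1 : Gα = Jmat α * G.submatrix c c * Jmat α := by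
    rw [hGα, lind_sub, part1 hk]
  refine ⟨h1, ?_⟩
  -- Part 2
  set Vα : Matrix α (Fin d) ℝ := V.submatrix c id with hVα
  have hBsub : (V * Q * Qᵀ * Vᵀ).submatrix c c = Vα * Q * Qᵀ * Vαᵀ := by
    rw [Matrix.submatrix_mul _ _ c id c Function.bijective_id,
        Matrix.submatrix_mul _ _ c id id Function.bijective_id,
        Matrix.submatrix_mul _ _ c id id Function.bijective_id]
    rw [Matrix.submatrix_id_id, Matrix.submatrix_id_id]
    rw [hVα, Matrix.transpose_submatrix]
  have hGsym : Gᵀ = G := by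
    ext i j
    simpa using congrFun (congrFun hG.1 i) j
  have hJBJ : Jmat α * ((V * Q * Qᵀ * Vᵀ).submatrix c c) * Jmat α = Gα := by
    have expand : Jmat α * ((V * Q * Qᵀ * Vᵀ).submatrix c c) * Jmat α
        = (Jmat α * (Vα * Q)) * (Jmat α * (Vα * Q))ᵀ := by
      rw [hBsub, Matrix.transpose_mul, Matrix.transpose_mul, Jmat_transpose]
      simp only [Matrix.mul_assoc]
    rw [expand, hQ, ← hWα]
  have hM0 : Jmat α * (G.submatrix c c - (V * Q * Qᵀ * Vᵀ).submatrix c c) * Jmat α = 0 := by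
    rw [Matrix.mul_sub, Matrix.sub_mul, hJBJ, ← h1, sub_self]
  have hMsym : (G.submatrix c c - (V * Q * Qᵀ * Vᵀ).submatrix c c)ᵀ
      = G.submatrix c c - (V * Q * Qᵀ * Vᵀ).submatrix c c := by
    rw [Matrix.transpose_sub, Matrix.transpose_submatrix, hGsym]
    congr 1
    rw [hBsub]
    simp only [Matrix.transpose_mul, Matrix.transpose_transpose, Matrix.mul_assoc]
  have hlz : lind (G.submatrix c c - (V * Q * Qᵀ * Vᵀ).submatrix c c) = 0 :=
    key2 _ hMsym hM0
  have goal' : lind ((V * Q * Qᵀ * Vᵀ).submatrix c c) = lind (G.submatrix c c) := by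
    ext i j
    have := congrFun (congrFun hlz i) j
    simp only [lind_apply, Matrix.sub_apply, Matrix.zero_apply] at this ⊢
    linarith
  calc (lind (V * Q * Qᵀ * Vᵀ)).submatrix c c
      = lind ((V * Q * Qᵀ * Vᵀ).submatrix c c) := lind_sub _ c
    _ = lind (G.submatrix c c) := goal'
    _ = (lind G).submatrix c c := (lind_sub G c).symm
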